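/- Let G be a Hausdorff topological gyrogroup and H a locally compact metrizable strongly L-subgyrogroup of G. If the quotient space G/H has countable tightness, then G has countable tightness, where a space X has countable tightness if for every point x ∈ X and every set P ⊆ X with x ∈ cl(P) there exists a countable subset Q of P with x ∈ cl(Q). -/

import Mathlib

universe u

/-- A gyrogroup: a groupoid with identity, inverses, gyroautomorphisms satisfying the
left gyroassociative law and the left loop property. -/
class Gyrogroup (G : Type u) where
  add : G → G → G
  zero : G
  neg : G → G
  gyr : G → G → G → G
  zero_add : ∀ x, add zero x = x
  add_zero : ∀ x, add x zero = x
  neg_add : ∀ x, add (neg x) x = zero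
  add_neg : ∀ x, add x (neg x) = zero
  gyr_bijective : ∀ a b, Function.Bijective (gyr a b)
  gyr_add : ∀ a b x y, gyr a b (add x y) = add (gyr a b x) (gyr a b y)
  gyrassoc : ∀ a b z, add a (add b z) = add (add a b) (gyr a b z)
  loop : ∀ a b, gyr (add a b) b = gyr a b

/-- A topological gyrogroup: the operation is jointly continuous and inversion is continuous. -/
class TopologicalGyrogroup (G : Type u) [TopologicalSpace G] [Gyrogroup G] : Prop where
  continuous_add : Continuous fun p : G × G => Gyrogroup.add p.1 p.2
  continuous_neg : Continuous (Gyrogroup.neg : G → G)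

/-- `H` is a subgyrogroup of `G` (by the subgyrogroup criterion: nonempty and closed
under the operation and inversion; this is equivalent to `(H, ⊕|H)` being itself a
gyrogroup whose gyroautomorphisms are the restrictions of those of `G`). -/
structure IsSubgyrogroup {G : Type u} [Gyrogroup G] (H : Set G) : Prop where
  nonempty : H.Nonempty
  add_mem : ∀ ⦃a⦄, a ∈ H → ∀ ⦃b⦄, b ∈ H → Gyrogroup.add a b ∈ H
  neg_mem : ∀ ⦃a⦄, a ∈ H → Gyrogroup.neg a ∈ H

/-- An `L`-subgyrogroup: a subgyrogroup with `gyr[a,h](H) = H` for all `a ∈ G`, `h ∈ H`. -/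
structure IsLSubgyrogroup {G : Type u} [Gyrogroup G] (H : Set G)
    extends IsSubgyrogroup H : Prop where
  gyr_image : ∀ (a : G), ∀ ⦃h⦄, h ∈ H → Gyrogroup.gyr a h '' H = H

/-- A strongly `L`-subgyrogroup: a subgyrogroup with `gyr[a,b](H) ⊆ H` for all `a, b ∈ G`. -/
structure IsStronglyLSubgyrogroup {G : Type u} [Gyrogroup G] (H : Set G)
    extends IsSubgyrogroup H : Prop where
  gyr_image_subset : ∀ a b : G, Gyrogroup.gyr a b '' H ⊆ H

/-- The pointwise sum `A ⊕ B = {a ⊕ b : a ∈ A, b ∈ B}` of two subsets. -/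
def setAdd {G : Type u} [Gyrogroup G] (A B : Set G) : Set G :=
  Set.image2 Gyrogroup.add A B

/-- The left coset `a ⊕ H = {a ⊕ h : h ∈ H}`. -/
def lCoset {G : Type u} [Gyrogroup G] (H : Set G) (a : G) : Set G :=
  (fun h => Gyrogroup.add a h) '' H

/-- The setoid on `G` identifying points with the same left coset modulo `H`. -/
def cosetSetoid {G : Type u} [Gyrogroup G] (H : Set G) : Setoid G :=
  ⟨fun x y => lCoset H x = lCoset H y,
   ⟨fun _ => rfl, fun h => h.symm, fun h₁ h₂ => h₁.trans h₂⟩⟩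

/-- The coset space `G/H`, carrying the quotient topology: a set `O ⊆ G/H` is open
iff `π⁻¹(O)` is open in `G`. -/
abbrev GyroQuot {G : Type u} [Gyrogroup G] (H : Set G) : Type u :=
  Quotient (cosetSetoid H)

/-- The natural quotient map `π : G → G/H`, `a ↦ a ⊕ H`. -/
def qmap {G : Type u} [Gyrogroup G] (H : Set G) (a : G) : GyroQuot H :=
  Quotient.mk (cosetSetoid H) a

/-- A space has countable tightness if whenever `x ∈ cl P` there is a countable
`Q ⊆ P` with `x ∈ cl Q`. -/
def HasCountableTightness (X : Type*) [TopologicalSpace X] : Prop :=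
  ∀ (x : X) (P : Set X), x ∈ closure P → ∃ Q ⊆ P, Q.Countable ∧ x ∈ closure Q


namespace GyroAux

open Gyrogroup

variable {G : Type u} [Gyrogroup G]

local infixl:65 " ⟡ " => Gyrogroup.add
local prefix:100 "∽" => Gyrogroup.neg
local notation "𝟬" => Gyrogroup.zero

theorem gyr_inj (a b : G) : Function.Injective (gyr a b : G → G) :=
  (Gyrogroup.gyr_bijective a b).1

theorem neg_add_gyr (a x : G) : ∽a ⟡ (a ⟡ x) = gyr (∽a) a x := by
  rw [Gyrogroup.gyrassoc, Gyrogroup.neg_add, Gyrogroup.zero_add]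

theorem add_left_cancel₀ {a x y : G} (h : a ⟡ x = a ⟡ y) : x = y := by
  have h2 : gyr (∽a) a x = gyr (∽a) a y := by
    rw [← neg_add_gyr, ← neg_add_gyr, h]
  exact gyr_inj _ _ h2

theorem gyr_zero_left (b z : G) : gyr (𝟬:G) b z = z := by
  have h := Gyrogroup.gyrassoc (𝟬:G) b z
  rw [Gyrogroup.zero_add, Gyrogroup.zero_add] at h
  exact (add_left_cancel₀ h).symm

theorem gyr_neg_self (a z : G) : gyr (∽a) a z = z := by
  have h := Gyrogroup.loop (∽a) a
  rw [Gyrogroup.neg_add] at h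
  rw [← h]; exact gyr_zero_left a z

theorem left_cancel (a x : G) : ∽a ⟡ (a ⟡ x) = x := by
  rw [neg_add_gyr, gyr_neg_self]

theorem gyr_self_neg (a z : G) : gyr a (∽a) z = z := by
  have h := Gyrogroup.loop a (∽a)
  rw [Gyrogroup.add_neg] at h
  rw [← h]; exact gyr_zero_left (∽a) z

theorem left_cancel' (a x : G) : a ⟡ (∽a ⟡ x) = x := by
  rw [Gyrogroup.gyrassoc, Gyrogroup.add_neg, Gyrogroup.zero_add, gyr_self_neg]

theorem eq_neg_of_add_eq_zero {a b : G} (h : a ⟡ b = 𝟬) : b = ∽a := by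
  have h2 := left_cancel a b
  rw [h, Gyrogroup.add_zero] at h2
  exact h2.symm

theorem neg_zero₀ : (∽𝟬 : G) = 𝟬 :=
  (eq_neg_of_add_eq_zero (Gyrogroup.zero_add (𝟬:G))).symm

theorem neg_neg₀ (a : G) : ∽∽a = a :=
  (eq_neg_of_add_eq_zero (Gyrogroup.neg_add a)).symm

theorem gyr_zero_pt (a b : G) : gyr a b (𝟬:G) = 𝟬 := by
  have h := Gyrogroup.gyr_add a b (𝟬:G) 𝟬
  rw [Gyrogroup.zero_add] at h
  have h2 : gyr a b (𝟬:G) ⟡ 𝟬 = gyr a b (𝟬:G) ⟡ gyr a b (𝟬:G) := by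
    rw [Gyrogroup.add_zero]; exact h
  exact (add_left_cancel₀ h2).symm

theorem gyr_neg_pt (a b x : G) : gyr a b (∽x) = ∽(gyr a b x) := by
  have h := Gyrogroup.gyr_add a b x (∽x)
  rw [Gyrogroup.add_neg, gyr_zero_pt] at h
  exact eq_neg_of_add_eq_zero h.symm

theorem gyrator (a b z : G) : gyr a b z = ∽(a ⟡ b) ⟡ (a ⟡ (b ⟡ z)) := by
  rw [Gyrogroup.gyrassoc a b z, left_cancel]

theorem gyrsum_inv (a b : G) : gyr a b (∽b ⟡ ∽a) = ∽(a ⟡ b) := by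
  apply eq_neg_of_add_eq_zero
  rw [← Gyrogroup.gyrassoc, left_cancel', Gyrogroup.add_neg]

theorem gyr_gyr (a b z : G) : gyr (∽b) (∽a) (gyr a b z) = z := by
  have e1 : ∽b ⟡ (∽a ⟡ (a ⟡ (b ⟡ z))) = z := by rw [left_cancel, left_cancel]
  rw [Gyrogroup.gyrassoc a b z] at e1
  rw [Gyrogroup.gyrassoc (∽b) (∽a) ((a ⟡ b) ⟡ gyr a b z)] at e1
  rw [Gyrogroup.gyr_add] at e1
  have e2 : gyr (∽b) (∽a) (a ⟡ b) = ∽(∽b ⟡ ∽a) := by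
    have := gyrsum_inv (∽b) (∽a)
    rwa [neg_neg₀, neg_neg₀] at this
  rw [e2, left_cancel'] at e1
  exact e1

theorem gyr_gyr' (a b z : G) : gyr a b (gyr (∽b) (∽a) z) = z := by
  have h := gyr_gyr (∽b) (∽a) z
  rwa [neg_neg₀, neg_neg₀] at h

theorem loopid (x b w : G) :
    ((x ⟡ b) ⟡ b) ⟡ w = (x ⟡ b) ⟡ (∽x ⟡ ((x ⟡ b) ⟡ w)) := by
  set z := ∽b ⟡ (∽x ⟡ ((x ⟡ b) ⟡ w)) with hz
  have h1 : gyr (x ⟡ b) b z = gyr x b z := by rw [Gyrogroup.loop]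
  rw [gyrator, gyrator] at h1
  have hbz : b ⟡ z = ∽x ⟡ ((x ⟡ b) ⟡ w) := left_cancel' b _
  rw [hbz] at h1
  rw [left_cancel'] at h1
  rw [left_cancel] at h1
  have h2 := congrArg (fun t => ((x ⟡ b) ⟡ b) ⟡ t) h1
  rw [left_cancel'] at h2
  exact h2.symm

theorem rho_surj (a b : G) : (∽a ⟡ ((a ⟡ b) ⟡ ∽a)) ⟡ a = b := by
  have h := loopid (∽(a ⟡ b)) ((a ⟡ b) ⟡ ∽a) a
  rw [left_cancel (a ⟡ b) (∽a)] at h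
  rw [neg_neg₀, Gyrogroup.neg_add, Gyrogroup.add_zero] at h
  rw [h, left_cancel]

/-- Right division: the (unique) `x` with `x ⟡ b = c` is `rdiv c b`. -/
def rdiv (c b : G) : G := c ⟡ (∽(c ⟡ b) ⟡ c)

theorem gyr_neg_b (c b : G) : gyr c b (∽b) = ∽(c ⟡ b) ⟡ c := by
  rw [gyrator, Gyrogroup.add_neg, Gyrogroup.add_zero]

theorem rdiv_rho (x b : G) : rdiv (x ⟡ b) b = x := by
  unfold rdiv
  rw [← gyr_neg_b (x ⟡ b) b, Gyrogroup.loop, ← Gyrogroup.gyrassoc,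
    Gyrogroup.add_neg, Gyrogroup.add_zero]

theorem rho_rdiv (c b : G) : rdiv c b ⟡ b = c := by
  obtain ⟨x, hx⟩ : ∃ x, x ⟡ b = c := ⟨_, rho_surj b c⟩
  rw [← hx, rdiv_rho]

end GyroAux


section GyroTop

open Gyrogroup GyroAux Set Filter Topology

variable {G : Type u} [Gyrogroup G]

local infixl:65 " ⟡ " => Gyrogroup.add
local prefix:100 "∽" => Gyrogroup.neg
local notation "𝟬" => Gyrogroup.zero

variable [TopologicalSpace G] [TopologicalGyrogroup G]

theorem cont_add : Continuous fun p : G × G => p.1 ⟡ p.2 :=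
  TopologicalGyrogroup.continuous_add

theorem cont_neg : Continuous fun x : G => ∽x :=
  TopologicalGyrogroup.continuous_neg

theorem cont_L (a : G) : Continuous fun x : G => a ⟡ x :=
  cont_add.comp (continuous_const.prodMk continuous_id)

theorem cont_R (b : G) : Continuous fun x : G => x ⟡ b :=
  cont_add.comp (continuous_id.prodMk continuous_const)

theorem cont_rdiv : Continuous fun p : G × G => GyroAux.rdiv p.1 p.2 := by
  have h1 : Continuous fun p : G × G => ∽(p.1 ⟡ p.2) := cont_neg.comp cont_add
  have h2 : Continuous fun p : G × G => ∽(p.1 ⟡ p.2) ⟡ p.1 :=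
    cont_add.comp (h1.prodMk continuous_fst)
  exact cont_add.comp (continuous_fst.prodMk h2)

/-- Left translation as a homeomorphism. -/
def homeoL (a : G) : G ≃ₜ G where
  toFun := fun x => a ⟡ x
  invFun := fun x => ∽a ⟡ x
  left_inv := left_cancel a
  right_inv := left_cancel' a
  continuous_toFun := cont_L a
  continuous_invFun := cont_L (∽a)

/-- Right translation as a homeomorphism. -/
def homeoR (b : G) : G ≃ₜ G where
  toFun := fun x => x ⟡ b
  invFun := fun c => GyroAux.rdiv c b
  left_inv := fun x => rdiv_rho x b
  right_inv := fun c => rho_rdiv c b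
  continuous_toFun := cont_R b
  continuous_invFun := cont_rdiv.comp (continuous_id.prodMk continuous_const)

theorem rdiv_zero_zero : GyroAux.rdiv (𝟬:G) 𝟬 = 𝟬 := by
  simp only [GyroAux.rdiv, Gyrogroup.zero_add, neg_zero₀]

/-- Regularity at the identity. -/
theorem exists_closure_subset {U : Set G} (hU : IsOpen U) (h0 : (𝟬:G) ∈ U) :
    ∃ V : Set G, IsOpen V ∧ (𝟬:G) ∈ V ∧ closure V ⊆ U := by
  have hpre : IsOpen ((fun p : G × G => GyroAux.rdiv p.1 p.2) ⁻¹' U) := hU.preimage cont_rdiv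
  have hmem : ((𝟬:G), (𝟬:G)) ∈ (fun p : G × G => GyroAux.rdiv p.1 p.2) ⁻¹' U := by
    simp only [Set.mem_preimage, rdiv_zero_zero]; exact h0
  obtain ⟨V1, V2, hV1, hV2, h01, h02, hsub⟩ := isOpen_prod_iff.1 hpre 𝟬 𝟬 hmem
  refine ⟨V1 ∩ V2, hV1.inter hV2, ⟨h01, h02⟩, ?_⟩
  intro x hx
  have hnb : IsOpen (homeoL x '' (V1 ∩ V2)) :=
    (homeoL x).isOpen_image.2 (hV1.inter hV2)
  have hxmem : x ∈ homeoL x '' (V1 ∩ V2) :=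
    ⟨𝟬, ⟨h01, h02⟩, Gyrogroup.add_zero x⟩
  obtain ⟨y, hy1, hy2⟩ := mem_closure_iff.1 hx _ hnb hxmem
  obtain ⟨w, hw, hwy⟩ := hy1
  have hwy' : x ⟡ w = y := hwy
  have : GyroAux.rdiv y w ∈ U := hsub (Set.mk_mem_prod hy2.1 hw.2)
  rwa [← hwy', rdiv_rho] at this

theorem exists_closure_subset_mem {U : Set G} (hU : U ∈ 𝓝 (𝟬:G)) :
    ∃ V : Set G, IsOpen V ∧ (𝟬:G) ∈ V ∧ closure V ⊆ U := by
  obtain ⟨U', hU'U, hU'o, h0U'⟩ := mem_nhds_iff.1 hU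
  obtain ⟨V, hVo, h0V, hVc⟩ := exists_closure_subset hU'o h0U'
  exact ⟨V, hVo, h0V, hVc.trans hU'U⟩

end GyroTop


section GyroQuotAux

open Gyrogroup GyroAux Set Filter Topology

variable {G : Type u} [Gyrogroup G]

local infixl:65 " ⟡ " => Gyrogroup.add
local prefix:100 "∽" => Gyrogroup.neg
local notation "𝟬" => Gyrogroup.zero

variable {H : Set G} (hH : IsStronglyLSubgyrogroup H)

include hH

theorem zero_mem_H : (𝟬:G) ∈ H := by
  obtain ⟨a, ha⟩ := hH.nonempty
  have := hH.add_mem ha (hH.neg_mem ha)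
  rwa [Gyrogroup.add_neg] at this

theorem gyr_mem (a b : G) {x : G} (hx : x ∈ H) : gyr a b x ∈ H :=
  hH.gyr_image_subset a b ⟨x, hx, rfl⟩

theorem mem_lCoset_iff {x y : G} : y ∈ lCoset H x ↔ ∽x ⟡ y ∈ H := by
  constructor
  · rintro ⟨h, hh, rfl⟩
    show ∽x ⟡ (x ⟡ h) ∈ H
    rw [left_cancel]
    exact hh
  · intro hy
    exact ⟨∽x ⟡ y, hy, left_cancel' x y⟩

theorem lCoset_eq_iff {x y : G} : lCoset H x = lCoset H y ↔ ∽x ⟡ y ∈ H := by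
  constructor
  · intro h
    have hy : y ∈ lCoset H y := ⟨𝟬, zero_mem_H hH, Gyrogroup.add_zero y⟩
    rw [← h] at hy
    exact (mem_lCoset_iff hH).1 hy
  · intro h0m
    set h₀ := ∽x ⟡ y with hh₀
    have hyx : y = x ⟡ h₀ := (left_cancel' x y).symm
    ext z
    simp only [lCoset, Set.mem_image]
    constructor
    · rintro ⟨h, hh, rfl⟩
      refine ⟨gyr x h₀ (∽h₀ ⟡ h), gyr_mem hH _ _ (hH.add_mem (hH.neg_mem h0m) hh), ?_⟩
      rw [hyx, ← Gyrogroup.gyrassoc, left_cancel']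
    · rintro ⟨h, hh, rfl⟩
      refine ⟨h₀ ⟡ gyr (∽h₀) (∽x) h, hH.add_mem h0m (gyr_mem hH _ _ hh), ?_⟩
      rw [Gyrogroup.gyrassoc, gyr_gyr', hyx]

theorem qmap_eq_iff {x y : G} : qmap H x = qmap H y ↔ ∽x ⟡ y ∈ H := by
  rw [← lCoset_eq_iff hH]
  exact ⟨fun h => Quotient.exact h, fun h => Quotient.sound h⟩

variable [TopologicalSpace G] [TopologicalGyrogroup G]

theorem continuous_qmap : Continuous (qmap H) :=
  continuous_quot_mk

theorem isOpenMap_qmap {O : Set G} (hO : IsOpen O) : IsOpen (qmap H '' O) := by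
  have hpre : qmap H ⁻¹' (qmap H '' O) = ⋃ h ∈ H, (fun x => x ⟡ h) '' O := by
    ext x
    simp only [Set.mem_preimage, Set.mem_image, Set.mem_iUnion]
    constructor
    · rintro ⟨o, ho, heq⟩
      have hh : ∽o ⟡ x ∈ H := (qmap_eq_iff hH).1 heq
      exact ⟨∽o ⟡ x, hh, o, ho, left_cancel' o x⟩
    · rintro ⟨h, hh, o, ho, rfl⟩
      refine ⟨o, ho, ((qmap_eq_iff hH).2 ?_)⟩
      rw [left_cancel]; exact hh
  have hopen : IsOpen (qmap H ⁻¹' (qmap H '' O)) := by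
    rw [hpre]
    exact isOpen_biUnion fun h _ => by
      rw [show (fun x => x ⟡ h) = ⇑(homeoR h) from rfl]; exact (homeoR h).isOpen_image.2 hO
  exact isQuotientMap_quot_mk.isOpen_preimage.1 hopen

/-- `Z ⊕ K` is closed whenever `Z` is closed and `K` is compact. -/
theorem closed_setAdd_compact [T2Space G] {Z K : Set G} (hZ : IsClosed Z) (hK : IsCompact K) :
    IsClosed (setAdd Z K) := by
  have hrepr : setAdd Z K = Prod.snd '' {p : ↥K × G | GyroAux.rdiv p.2 ↑p.1 ∈ Z} := by
    ext x
    constructor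
    · rintro ⟨z, hz, k, hk, rfl⟩
      exact ⟨(⟨k, hk⟩, z ⟡ k), by simpa [rdiv_rho] using hz, rfl⟩
    · rintro ⟨⟨⟨k, hk⟩, y⟩, hy, rfl⟩
      exact ⟨GyroAux.rdiv y k, hy, k, hk, rho_rdiv y k⟩
  haveI : CompactSpace ↥K := isCompact_iff_compactSpace.1 hK
  rw [hrepr]
  apply isClosedMap_snd_of_compactSpace
  exact hZ.preimage (cont_rdiv.comp (continuous_snd.prodMk
    (continuous_subtype_val.comp continuous_fst)))

theorem exists_compact_nbhd (hlc : LocallyCompactSpace H) :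
    ∃ (K U : Set G), IsCompact K ∧ K ⊆ H ∧ IsOpen U ∧ (𝟬:G) ∈ U ∧ U ∩ H ⊆ K := by
  obtain ⟨s, hs, _, hscomp⟩ :=
    LocallyCompactSpace.local_compact_nhds (⟨𝟬, zero_mem_H hH⟩ : H) Set.univ Filter.univ_mem
  obtain ⟨t, ht, hts⟩ := mem_nhds_induced Subtype.val _ _ |>.1 hs
  obtain ⟨U, hUt, hUopen, hU0⟩ := mem_nhds_iff.1 ht
  refine ⟨Subtype.val '' s, U, hscomp.image continuous_subtype_val, ?_, hUopen, hU0, ?_⟩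
  · rintro _ ⟨y, _, rfl⟩; exact y.2
  · rintro x ⟨hxU, hxH⟩
    exact ⟨⟨x, hxH⟩, hts (hUt hxU), rfl⟩

end GyroQuotAux


section GyroMain

open Gyrogroup GyroAux Set Filter Topology

variable {G : Type u} [Gyrogroup G] [TopologicalSpace G] [TopologicalGyrogroup G] [T2Space G]

local infixl:65 " ⟡ " => Gyrogroup.add
local prefix:100 "∽" => Gyrogroup.neg
local notation "𝟬" => Gyrogroup.zero

variable {H : Set G}

/-- Core step: if `S` is ω-closed and `𝟬 ∈ closure S`, then `𝟬 ∈ S`. -/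
theorem zero_mem_of_omegaClosed (hH : IsStronglyLSubgyrogroup H)
    (hlc : LocallyCompactSpace H) (hmet : TopologicalSpace.MetrizableSpace H)
    (hct : HasCountableTightness (GyroQuot H))
    (S : Set G) (hS : ∀ Q ⊆ S, Q.Countable → closure Q ⊆ S)
    (h0cl : (𝟬:G) ∈ closure S) : (𝟬:G) ∈ S := by
  classical
  by_contra h0S
  obtain ⟨K, U, hKcomp, hKH, hUopen, hU0, hUK⟩ := exists_compact_nbhd hH hlc
  have hΦ : Continuous fun p : G × G => ∽p.1 ⟡ p.2 :=
    cont_add.comp ((cont_neg.comp continuous_fst).prodMk continuous_snd)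
  have hΦ00 : ((𝟬:G), (𝟬:G)) ∈ (fun p : G × G => ∽p.1 ⟡ p.2) ⁻¹' U := by
    simp only [Set.mem_preimage, neg_zero₀, Gyrogroup.zero_add]
    exact hU0
  obtain ⟨A1, A2, hA1, hA2, h0A1, h0A2, hAsub⟩ :=
    isOpen_prod_iff.1 (hUopen.preimage hΦ) 𝟬 𝟬 hΦ00
  have hW₂o : IsOpen (A1 ∩ A2) := hA1.inter hA2
  have h0W₂ : (𝟬:G) ∈ A1 ∩ A2 := ⟨h0A1, h0A2⟩
  have hΦW₂ : ∀ a ∈ A1 ∩ A2, ∀ b ∈ A1 ∩ A2, ∽a ⟡ b ∈ U := fun a ha b hb =>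
    hAsub (Set.mk_mem_prod ha.1 hb.2)
  obtain ⟨W₁, hW₁o, h0W₁, hW₁c⟩ := exists_closure_subset hW₂o h0W₂
  obtain ⟨W, hWo, h0W, hWc⟩ := exists_closure_subset hW₁o h0W₁
  set C := closure W with hCdef
  have hCc : IsClosed C := isClosed_closure
  have h0C : (𝟬:G) ∈ C := subset_closure h0W
  have hCW₁ : C ⊆ W₁ := hWc
  have hW₁W₂ : W₁ ⊆ A1 ∩ A2 := subset_closure.trans hW₁c
  have hkey : ∀ z ∈ W₁, ∀ o ∈ W₁, ∽z ⟡ o ∈ H → ∽z ⟡ o ∈ K :=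
    fun z hz o ho hmem => hUK ⟨hΦW₂ z (hW₁W₂ hz) o (hW₁W₂ ho), hmem⟩
  -- the fiber over 𝟬 inside C
  have hFK : H ∩ C = K ∩ C := by
    ext z
    constructor
    · rintro ⟨hzH, hzC⟩
      have h1 : ∽(𝟬:G) ⟡ z ∈ H := by rwa [neg_zero₀, Gyrogroup.zero_add]
      have h2 := hkey 𝟬 (hCW₁ h0C) z (hCW₁ hzC) h1
      rw [neg_zero₀, Gyrogroup.zero_add] at h2
      exact ⟨h2, hzC⟩
    · rintro ⟨hzK, hzC⟩; exact ⟨hKH hzK, hzC⟩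
  have hFcomp : IsCompact (H ∩ C) := by rw [hFK]; exact hKcomp.inter_right hCc
  set C₀ := (H ∩ C) ∩ S with hC₀def
  -- C₀ is closed in the fiber (uses metrizability of H)
  have hC₀cl : closure C₀ ∩ (H ∩ C) ⊆ C₀ := by
    rintro z ⟨hzcl, hzH, hzC⟩
    haveI := hmet
    have hC₀H : C₀ ⊆ H := fun w hw => hw.1.1
    have himg : Subtype.val '' (Subtype.val ⁻¹' C₀ : Set H) = C₀ := by
      rw [Subtype.image_preimage_coe]
      exact Set.inter_eq_self_of_subset_right hC₀H
    have hz' : (⟨z, hzH⟩ : H) ∈ closure (Subtype.val ⁻¹' C₀ : Set H) := by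
      rw [closure_subtype, himg]
      exact hzcl
    obtain ⟨u, hu, hulim⟩ := mem_closure_iff_seq_limit.1 hz'
    have hrange : Set.range (fun n => (u n : G)) ⊆ C₀ := by
      rintro _ ⟨n, rfl⟩; exact hu n
    have hzQ : z ∈ closure (Set.range fun n => (u n : G)) := by
      apply mem_closure_of_tendsto ((continuous_subtype_val.tendsto _).comp hulim)
      exact Filter.Eventually.of_forall fun n => Set.mem_range_self n
    have hzS : z ∈ S :=
      hS _ (hrange.trans fun w hw => hw.2) (Set.countable_range _) hzQ
    exact ⟨⟨hzH, hzC⟩, hzS⟩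
  have hC₀eq : C₀ = (H ∩ C) ∩ closure C₀ := by
    apply Set.Subset.antisymm
    · exact fun w hw => ⟨hw.1, subset_closure hw⟩
    · rintro w ⟨hw1, hw2⟩; exact hC₀cl ⟨hw2, hw1⟩
  have hC₀comp : IsCompact C₀ := by rw [hC₀eq]; exact hFcomp.inter_right isClosed_closure
  -- separate 𝟬 from C₀
  have h0nC₀ : (𝟬:G) ∈ C₀ᶜ := fun h => h0S h.2
  obtain ⟨D, hDo, h0D, hDc⟩ := exists_closure_subset hC₀comp.isClosed.isOpen_compl h0nC₀
  set B := (closure D)ᶜ with hBdef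
  have hBo : IsOpen B := isClosed_closure.isOpen_compl
  have hC₀B : C₀ ⊆ B := fun w hw hwD => hDc hwD hw
  have hBD : B ∩ D = ∅ := by
    ext w
    simp only [Set.mem_inter_iff, Set.mem_empty_iff_false, iff_false, not_and]
    exact fun hwB hwD => hwB (subset_closure hwD)
  set S₁ := (S ∩ C) \ B with hS₁def
  have hFS₁ : (H ∩ C) ∩ S₁ = ∅ := by
    ext w
    simp only [Set.mem_inter_iff, Set.mem_empty_iff_false, iff_false, not_and]
    rintro ⟨hwH, hwC⟩ ⟨⟨hwS, _⟩, hwB⟩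
    exact hwB (hC₀B ⟨⟨hwH, hwC⟩, hwS⟩)
  -- (∗) : the image of S₁ is "closed along π(C)"
  have hstar : ∀ c ∈ C, qmap H c ∈ closure (qmap H '' S₁) → qmap H c ∈ qmap H '' S₁ := by
    intro c hcC hccl
    obtain ⟨Q', hQ'sub, hQ'ct, hqcl⟩ := hct _ _ hccl
    rcases Q'.eq_empty_or_nonempty with hE | hNE
    · rw [hE, closure_empty] at hqcl
      exact absurd hqcl (Set.notMem_empty _)
    obtain ⟨g, hg⟩ := hQ'ct.exists_eq_range hNE
    have hgmem : ∀ n : ℕ, ∃ s, s ∈ S₁ ∧ qmap H s = g n := by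
      intro n
      have hn : g n ∈ Q' := by rw [hg]; exact ⟨n, rfl⟩
      obtain ⟨s, hs, hseq⟩ := hQ'sub hn
      exact ⟨s, hs, hseq⟩
    choose sf hsf1 hsf2 using hgmem
    have hQS₁ : Set.range sf ⊆ S₁ := by rintro _ ⟨n, rfl⟩; exact hsf1 n
    set Z := closure (Set.range sf) with hZdef
    have hZS₁ : Z ⊆ S₁ := by
      intro w hw
      have h1 : w ∈ S := hS _ (fun q hq => (hQS₁ hq).1.1) (Set.countable_range _) hw
      have h2 : w ∈ C := closure_minimal (fun q hq => (hQS₁ hq).1.2) hCc hw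
      have h3 : w ∉ B := closure_minimal (fun q hq => (hQS₁ hq).2) hBo.isClosed_compl hw
      exact ⟨⟨h1, h2⟩, h3⟩
    by_cases hcase : ∃ z ∈ Z, qmap H z = qmap H c
    · obtain ⟨z, hzZ, hzeq⟩ := hcase
      exact ⟨z, hZS₁ hzZ, hzeq⟩
    · exfalso
      push_neg at hcase
      have hZK : IsClosed (setAdd Z K) := closed_setAdd_compact hH isClosed_closure hKcomp
      have hcO : c ∉ setAdd Z K := by
        rintro ⟨z, hz, k, hk, rfl⟩
        refine hcase z hz ?_
        refine (qmap_eq_iff hH).2 ?_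
        rw [left_cancel]
        exact hKH hk
      have hOo : IsOpen (W₁ \ setAdd Z K) := hW₁o.sdiff hZK
      have hcmem : c ∈ W₁ \ setAdd Z K := ⟨hCW₁ hcC, hcO⟩
      have hπO : IsOpen (qmap H '' (W₁ \ setAdd Z K)) := isOpenMap_qmap hH hOo
      have hqmem : qmap H c ∈ qmap H '' (W₁ \ setAdd Z K) := Set.mem_image_of_mem _ hcmem
      obtain ⟨y, hyO, hyQ'⟩ := mem_closure_iff.1 hqcl _ hπO hqmem
      obtain ⟨o, hoO, rfl⟩ := hyO
      rw [hg] at hyQ'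
      obtain ⟨n, hn⟩ := hyQ'
      have heq : qmap H (sf n) = qmap H o := by rw [hsf2 n, hn]
      have hzW₁ : sf n ∈ W₁ := hCW₁ (hQS₁ ⟨n, rfl⟩).1.2
      have hh : ∽(sf n) ⟡ o ∈ H := (qmap_eq_iff hH).1 heq
      have hhK : ∽(sf n) ⟡ o ∈ K := hkey _ hzW₁ _ hoO.1 hh
      have : o ∈ setAdd Z K :=
        ⟨sf n, subset_closure ⟨n, rfl⟩, ∽(sf n) ⟡ o, hhK, left_cancel' _ _⟩
      exact hoO.2 this
  -- π(𝟬) is not in the image of S₁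
  have h0nπ : qmap H (𝟬:G) ∉ qmap H '' S₁ := by
    rintro ⟨s, hsS₁, hseq⟩
    have h1 : ∽s ⟡ 𝟬 ∈ H := (qmap_eq_iff hH).1 hseq
    rw [Gyrogroup.add_zero] at h1
    have hsH : s ∈ H := by
      have h2 := hH.neg_mem h1
      rwa [neg_neg₀] at h2
    have hmem : s ∈ (H ∩ C) ∩ S₁ := ⟨⟨hsH, hsS₁.1.2⟩, hsS₁⟩
    rw [hFS₁] at hmem
    exact absurd hmem (Set.notMem_empty s)
  have h0ncl : qmap H (𝟬:G) ∉ closure (qmap H '' S₁) := fun hmem =>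
    h0nπ (hstar 𝟬 h0C hmem)
  set N := W ∩ D ∩ qmap H ⁻¹' (closure (qmap H '' S₁))ᶜ with hNdef
  have hNo : IsOpen N :=
    (hWo.inter hDo).inter (isClosed_closure.isOpen_compl.preimage (continuous_qmap hH))
  have h0N : (𝟬:G) ∈ N := ⟨⟨h0W, h0D⟩, h0ncl⟩
  obtain ⟨s, hsN, hsS⟩ := mem_closure_iff.1 h0cl N hNo h0N
  have hsC : s ∈ C := subset_closure hsN.1.1
  have hsnotS₁ : s ∉ S₁ := fun hs₁ =>
    hsN.2 (subset_closure (Set.mem_image_of_mem _ hs₁))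
  have hsB : s ∈ B := by
    by_contra hnB
    exact hsnotS₁ ⟨⟨hsS, hsC⟩, hnB⟩
  have : s ∈ B ∩ D := ⟨hsB, hsN.1.2⟩
  rw [hBD] at this
  exact absurd this (Set.notMem_empty s)

/-- ω-closed sets are closed. -/
theorem closure_subset_of_omegaClosed (hH : IsStronglyLSubgyrogroup H)
    (hlc : LocallyCompactSpace H) (hmet : TopologicalSpace.MetrizableSpace H)
    (hct : HasCountableTightness (GyroQuot H))
    (S : Set G) (hS : ∀ Q ⊆ S, Q.Countable → closure Q ⊆ S) : closure S ⊆ S := by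
  intro x₀ hx₀
  set S' := (fun g => ∽x₀ ⟡ g) '' S with hS'def
  have hS'omega : ∀ Q ⊆ S', Q.Countable → closure Q ⊆ S' := by
    intro Q hQ hQc
    have hQ0sub : (fun g => x₀ ⟡ g) '' Q ⊆ S := by
      rintro _ ⟨q, hq, rfl⟩
      obtain ⟨s, hs, rfl⟩ := hQ hq
      show x₀ ⟡ (∽x₀ ⟡ s) ∈ S
      rwa [left_cancel']
    have hQrec : Q = (fun g => ∽x₀ ⟡ g) '' ((fun g => x₀ ⟡ g) '' Q) := by
      ext w
      simp only [Set.mem_image]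
      constructor
      · intro hw; exact ⟨x₀ ⟡ w, ⟨w, hw, rfl⟩, left_cancel x₀ w⟩
      · rintro ⟨_, ⟨w', hw', rfl⟩, rfl⟩
        rwa [left_cancel]
    have hcls : closure ((fun g => ∽x₀ ⟡ g) '' ((fun g => x₀ ⟡ g) '' Q))
        = (fun g => ∽x₀ ⟡ g) '' closure ((fun g => x₀ ⟡ g) '' Q) :=
      ((homeoL (∽x₀)).image_closure _).symm
    rw [hQrec, hcls]
    exact Set.image_mono (hS _ hQ0sub (hQc.image _))
  have h0cl : (𝟬:G) ∈ closure S' := by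
    have he : (𝟬:G) = (fun g => ∽x₀ ⟡ g) x₀ := (Gyrogroup.neg_add x₀).symm
    have hcl2 : (fun g => ∽x₀ ⟡ g) '' closure S = closure S' :=
      (homeoL (∽x₀)).image_closure S
    rw [he, ← hcl2]
    exact Set.mem_image_of_mem _ hx₀
  obtain ⟨s, hs, hseq⟩ := zero_mem_of_omegaClosed hH hlc hmet hct S' hS'omega h0cl
  have hsx : s = x₀ := by
    have h2 := congrArg (fun t => x₀ ⟡ t) hseq
    simpa only [left_cancel', Gyrogroup.add_zero] using h2
  rwa [← hsx]

end GyroMain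

/-- If `H` is a locally compact metrizable strongly L-subgyrogroup of a
Hausdorff topological gyrogroup `G` and `G/H` has countable tightness, then `G` has
countable tightness. -/
theorem stmt_19 {G : Type u} [Gyrogroup G] [TopologicalSpace G] [TopologicalGyrogroup G]
    [T2Space G] (H : Set G) (hH : IsStronglyLSubgyrogroup H)
    (hlc : LocallyCompactSpace H) (hmet : TopologicalSpace.MetrizableSpace H)
    (hct : HasCountableTightness (GyroQuot H)) :
    HasCountableTightness G := by
  classical
  intro x P hxP
  have hPsub : P ⊆ {y : G | ∃ Q : Set G, Q ⊆ P ∧ Q.Countable ∧ y ∈ closure Q} := fun p hp =>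
    ⟨{p}, Set.singleton_subset_iff.2 hp, Set.countable_singleton p, subset_closure rfl⟩
  have homega : ∀ Q ⊆ {y : G | ∃ Q : Set G, Q ⊆ P ∧ Q.Countable ∧ y ∈ closure Q},
      Q.Countable → closure Q ⊆ {y : G | ∃ Q : Set G, Q ⊆ P ∧ Q.Countable ∧ y ∈ closure Q} := by
    intro Q hQ hQc
    have hch : ∀ q ∈ Q, ∃ R : Set G, R ⊆ P ∧ R.Countable ∧ q ∈ closure R := fun q hq => hQ hq
    choose! R hR1 hR2 hR3 using hch
    have hRallP : (⋃ q ∈ Q, R q) ⊆ P := Set.iUnion₂_subset fun q hq => hR1 q hq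
    have hRallc : (⋃ q ∈ Q, R q).Countable := hQc.biUnion fun q hq => hR2 q hq
    have hQsub : Q ⊆ closure (⋃ q ∈ Q, R q) := fun q hq =>
      closure_mono (Set.subset_biUnion_of_mem hq) (hR3 q hq)
    intro y hy
    exact ⟨⋃ q ∈ Q, R q, hRallP, hRallc,
      (closure_minimal hQsub isClosed_closure) hy⟩
  have hcl := closure_subset_of_omegaClosed hH hlc hmet hct _ homega
  obtain ⟨Q, hQ1, hQ2, hQ3⟩ := hcl (closure_mono hPsub hxP)
  exact ⟨Q, hQ1, hQ2, hQ3⟩
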